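/- arXiv:1810.10295 — 11 statements merged into one kernel-verified Lean document; each statement's English description precedes it below -/
import Mathlib

section
/- Let G be an abelian group and let V be a two-sided invariant and (-I)-invariant linear space of complex-valued functions on G. Let f, g, h : G → ℂ be functions such that for every y ∈ G the functions x ↦ f(x−y) − f(x)g(y) − g(x)f(y) − h(x)h(y) and x ↦ f(x−y) − f(y−x) belong to V. Then for every y ∈ G both the function x ↦ f^e(x)g^o(y) + g^e(x)f^o(y) + h^e(x)h^o(y) and the function x ↦ f^e(y)g^o(x) + g^e(y)f^o(x) + h^e(y)h^o(x) belong to V. -/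
theorem stmt_1 {G : Type*} [AddCommGroup G]
    (V : Submodule ℂ (G → ℂ))
    (hVtrans : ∀ f : G → ℂ, f ∈ V → ∀ y : G, (fun x => f (x + y)) ∈ V)
    (hVneg : ∀ f : G → ℂ, f ∈ V → (fun x => f (-x)) ∈ V)
    (f g h : G → ℂ)
    (h1 : ∀ y : G, (fun x => f (x - y) - f x * g y - g x * f y - h x * h y) ∈ V)
    (h2 : ∀ y : G, (fun x => f (x - y) - f (y - x)) ∈ V) :
    ∀ y : G,
      ((fun x => (f x + f (-x)) / 2 * ((g y - g (-y)) / 2)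
          + (g x + g (-x)) / 2 * ((f y - f (-y)) / 2)
          + (h x + h (-x)) / 2 * ((h y - h (-y)) / 2)) ∈ V) ∧
      ((fun x => (f y + f (-y)) / 2 * ((g x - g (-x)) / 2)
          + (g y + g (-y)) / 2 * ((f x - f (-x)) / 2)
          + (h y + h (-y)) / 2 * ((h x - h (-x)) / 2)) ∈ V) := by
  intro y
  have A := h1 y
  have B := h1 (-y)
  have C := hVneg _ A
  have D := hVneg _ B
  have E := h2 y
  have Fm := h2 (-y)
  constructor
  · have mem := V.smul_mem ((1:ℂ)/4)
      (V.add_mem (V.sub_mem (V.add_mem (V.sub_mem (V.sub_mem E Fm) A) B) C) D)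
    convert mem using 1
    funext x
    simp only [Pi.smul_apply, Pi.add_apply, Pi.sub_apply, smul_eq_mul]
    have e1 : x - -y = x + y := by abel
    have e2 : -x - -y = y - x := by abel
    have e3 : -x - y = -y - x := by abel
    rw [e1, e2, e3]
    ring
  · have mem := V.smul_mem ((1:ℂ)/4)
      (V.add_mem (V.add_mem (V.sub_mem (V.sub_mem (V.add_mem E Fm) A) B) C) D)
    convert mem using 1
    funext x
    simp only [Pi.smul_apply, Pi.add_apply, Pi.sub_apply, smul_eq_mul]
    have e1 : x - -y = x + y := by abel
    have e2 : -x - -y = y - x := by abel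
    have e3 : -x - y = -y - x := by abel
    rw [e1, e2, e3]
    ring
end

section
/- Let G be an abelian group and let V be a two-sided invariant and (-I)-invariant linear space of complex-valued functions on G. Let f, g, h : G → ℂ be functions such that for every y ∈ G the functions x ↦ f(x−y) − f(x)g(y) − g(x)f(y) − h(x)h(y) and x ↦ f(x−y) − f(y−x) belong to V. Then for every y ∈ G the function x ↦ g^o(x)f^e(y) + h^o(x)h^e(y) belongs to V. -/
theorem stmt_2 {G : Type*} [AddCommGroup G]
    (V : Submodule ℂ (G → ℂ))
    (hVtrans : ∀ f : G → ℂ, f ∈ V → ∀ y : G, (fun x => f (x + y)) ∈ V)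
    (hVneg : ∀ f : G → ℂ, f ∈ V → (fun x => f (-x)) ∈ V)
    (f g h : G → ℂ)
    (h1 : ∀ y : G, (fun x => f (x - y) - f x * g y - g x * f y - h x * h y) ∈ V)
    (h2 : ∀ y : G, (fun x => f (x - y) - f (y - x)) ∈ V) :
    ∀ y : G,
      (fun x => (g x - g (-x)) / 2 * ((f y + f (-y)) / 2)
        + (h x - h (-x)) / 2 * ((h y + h (-y)) / 2)) ∈ V := by
  intro y
  have m1 := h1 y
  have m2 := h1 (-y)
  have m1n := hVneg _ m1
  have m2n := hVneg _ m2
  have hfo : (fun x : G => f x - f (-x)) ∈ V := by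
    have := h2 0
    simpa using this
  have hb1 := h2 y
  have hb2 := h2 (-y)
  have hsm : (fun x : G => (g y + g (-y)) * (f x - f (-x))) ∈ V := by
    have := V.smul_mem (g y + g (-y)) hfo
    simpa [smul_eq_mul, Pi.smul_def] using this
  have key : (fun x : G =>
      ((f (x - y) - f x * g y - g x * f y - h x * h y)
        - (f (-x - y) - f (-x) * g y - g (-x) * f y - h (-x) * h y))
      + ((f (x - -y) - f x * g (-y) - g x * f (-y) - h x * h (-y))
        - (f (-x - -y) - f (-x) * g (-y) - g (-x) * f (-y) - h (-x) * h (-y)))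
      - (f (x - y) - f (y - x))
      - (f (x - -y) - f (-y - x))
      + (g y + g (-y)) * (f x - f (-x))) ∈ V := by
    exact V.add_mem (V.sub_mem (V.sub_mem (V.add_mem (V.sub_mem m1 m1n)
      (V.sub_mem m2 m2n)) hb1) hb2) hsm
  have e2 : ∀ x : G, -x - -y = y - x := fun x => by abel
  have e3 : ∀ x : G, -y - x = -x - y := fun x => by abel
  have heq : (fun x : G => (g x - g (-x)) / 2 * ((f y + f (-y)) / 2)
        + (h x - h (-x)) / 2 * ((h y + h (-y)) / 2))
      = ((-1 : ℂ)/4) • (fun x : G =>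
      ((f (x - y) - f x * g y - g x * f y - h x * h y)
        - (f (-x - y) - f (-x) * g y - g (-x) * f y - h (-x) * h y))
      + ((f (x - -y) - f x * g (-y) - g x * f (-y) - h x * h (-y))
        - (f (-x - -y) - f (-x) * g (-y) - g (-x) * f (-y) - h (-x) * h (-y)))
      - (f (x - y) - f (y - x))
      - (f (x - -y) - f (-y - x))
      + (g y + g (-y)) * (f x - f (-x))) := by
    funext x
    simp only [Pi.smul_apply, smul_eq_mul, e2, e3]
    ring
  rw [heq]
  exact V.smul_mem _ key
end

section
/- Let G be an abelian group and let V be a two-sided invariant and (-I)-invariant linear space of complex-valued functions on G. Let f, g, h : G → ℂ be functions such that f and h are linearly independent modulo V and the odd part h^o of h does not belong to V. Suppose that for every y ∈ G the functions x ↦ f(x−y) − f(x)g(y) − g(x)f(y) − h(x)h(y) and x ↦ f(x−y) − f(y−x) belong to V. Then there exist constants γ, η ∈ ℂ such that h^e = γ·f^e and g^o = −γ·h^o − η·f^o. -/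
theorem stmt_4 {G : Type*} [AddCommGroup G]
    (V : Submodule ℂ (G → ℂ))
    (hVtrans : ∀ f : G → ℂ, f ∈ V → ∀ y : G, (fun x => f (x + y)) ∈ V)
    (hVneg : ∀ f : G → ℂ, f ∈ V → (fun x => f (-x)) ∈ V)
    (f g h : G → ℂ)
    (hindep : ∀ c d : ℂ, (fun x => c * f x + d * h x) ∈ V → c = 0 ∧ d = 0)
    (hho : (fun x => (h x - h (-x)) / 2) ∉ V)
    (h1 : ∀ y : G, (fun x => f (x - y) - f x * g y - g x * f y - h x * h y) ∈ V)
    (h2 : ∀ y : G, (fun x => f (x - y) - f (y - x)) ∈ V) :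
    ∃ γ η : ℂ,
      (∀ x : G, (h x + h (-x)) / 2 = γ * ((f x + f (-x)) / 2)) ∧
      (∀ x : G, (g x - g (-x)) / 2 = -γ * ((h x - h (-x)) / 2) - η * ((f x - f (-x)) / 2)) := by
  classical
  -- odd part of f is in V
  have hfo : (fun x : G => (f x - f (-x)) / 2) ∈ V := by
    have h0 := h2 0
    have e : (fun x : G => (f x - f (-x)) / 2)
        = (2⁻¹ : ℂ) • (fun x : G => f (x - 0) - f (0 - x)) := by
      funext x
      simp only [Pi.smul_apply, smul_eq_mul, sub_zero, zero_sub]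
      ring
    rw [e]; exact V.smul_mem _ h0
  -- f not in V
  have hfV : f ∉ V := by
    intro hf
    have hm : (fun x => (1:ℂ) * f x + 0 * h x) ∈ V := by
      have e : (fun x => (1:ℂ) * f x + 0 * h x) = f := by funext x; ring
      rw [e]; exact hf
    exact one_ne_zero (hindep 1 0 hm).1
  -- even part of f is not in V
  have hfeV : (fun x : G => (f x + f (-x)) / 2) ∉ V := by
    intro hm
    apply hfV
    have e : f = (fun x : G => (f x + f (-x)) / 2) + (fun x : G => (f x - f (-x)) / 2) := by
      funext x; simp only [Pi.add_apply]; ring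
    rw [e]; exact V.add_mem hm hfo
  -- the key antisymmetrized family
  have hS : ∀ y : G, (fun x => f (-x) * g y + g (-x) * f y + h (-x) * h y
      - f x * g (-y) - g x * f (-y) - h x * h (-y)) ∈ V := by
    intro y
    have ha : (fun x => f (-x - y) - f (-x) * g y - g (-x) * f y - h (-x) * h y) ∈ V :=
      hVneg _ (h1 y)
    have hb : (fun x => f (x + y) - f (-y - x)) ∈ V := by
      have e : (fun x : G => f (x + y) - f (-y - x))
          = (fun x : G => f (x - -y) - f (-y - x)) := by
        funext x; rw [sub_neg_eq_add]
      rw [e]; exact h2 (-y)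
    have hc : (fun x => f (x + y) - f x * g (-y) - g x * f (-y) - h x * h (-y)) ∈ V := by
      have e : (fun x : G => f (x + y) - f x * g (-y) - g x * f (-y) - h x * h (-y))
          = (fun x : G => f (x - -y) - f x * g (-y) - g x * f (-y) - h x * h (-y)) := by
        funext x; rw [sub_neg_eq_add]
      rw [e]; exact h1 (-y)
    have e : (fun x => f (-x) * g y + g (-x) * f y + h (-x) * h y
        - f x * g (-y) - g x * f (-y) - h x * h (-y))
        = ((fun x => f (x + y) - f x * g (-y) - g x * f (-y) - h x * h (-y))
          - (fun x => f (-x - y) - f (-x) * g y - g (-x) * f y - h (-x) * h y))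
          - (fun x => f (x + y) - f (-y - x)) := by
      funext x
      simp only [Pi.sub_apply]
      rw [show (-x - y : G) = -y - x by abel]
      ring
    rw [e]; exact V.sub_mem (V.sub_mem hc ha) hb
  -- family (A)
  have hA : ∀ y : G, (fun x => (g y + g (-y)) / 2 * ((f x - f (-x)) / 2)
      + (f y + f (-y)) / 2 * ((g x - g (-x)) / 2)
      + (h y + h (-y)) / 2 * ((h x - h (-x)) / 2)) ∈ V := by
    intro y
    have e : (fun x => (g y + g (-y)) / 2 * ((f x - f (-x)) / 2)
        + (f y + f (-y)) / 2 * ((g x - g (-x)) / 2)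
        + (h y + h (-y)) / 2 * ((h x - h (-x)) / 2))
        = (-(1/4) : ℂ) • ((fun x => f (-x) * g y + g (-x) * f y + h (-x) * h y
            - f x * g (-y) - g x * f (-y) - h x * h (-y))
          + (fun x => f (-x) * g (-y) + g (-x) * f (-y) + h (-x) * h (-y)
            - f x * g (-(-y)) - g x * f (-(-y)) - h x * h (-(-y)))) := by
      funext x
      simp only [Pi.smul_apply, Pi.add_apply, smul_eq_mul, neg_neg]
      ring
    rw [e]; exact V.smul_mem _ (V.add_mem (hS y) (hS (-y)))
  -- family (B)
  have hB : ∀ y : G, (fun x => (g y - g (-y)) / 2 * ((f x + f (-x)) / 2)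
      + (f y - f (-y)) / 2 * ((g x + g (-x)) / 2)
      + (h y - h (-y)) / 2 * ((h x + h (-x)) / 2)) ∈ V := by
    intro y
    have e : (fun x => (g y - g (-y)) / 2 * ((f x + f (-x)) / 2)
        + (f y - f (-y)) / 2 * ((g x + g (-x)) / 2)
        + (h y - h (-y)) / 2 * ((h x + h (-x)) / 2))
        = ((1/4) : ℂ) • ((fun x => f (-x) * g y + g (-x) * f y + h (-x) * h y
            - f x * g (-y) - g x * f (-y) - h x * h (-y))
          - (fun x => f (-x) * g (-y) + g (-x) * f (-y) + h (-x) * h (-y)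
            - f x * g (-(-y)) - g x * f (-(-y)) - h x * h (-(-y)))) := by
      funext x
      simp only [Pi.smul_apply, Pi.sub_apply, smul_eq_mul, neg_neg]
      ring
    rw [e]; exact V.smul_mem _ (V.sub_mem (hS y) (hS (-y)))
  -- family (A') : drop the f-odd term, which is in V
  have hA' : ∀ y : G, (fun x => (f y + f (-y)) / 2 * ((g x - g (-x)) / 2)
      + (h y + h (-y)) / 2 * ((h x - h (-x)) / 2)) ∈ V := by
    intro y
    have e : (fun x => (f y + f (-y)) / 2 * ((g x - g (-x)) / 2)
        + (h y + h (-y)) / 2 * ((h x - h (-x)) / 2))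
        = (fun x => (g y + g (-y)) / 2 * ((f x - f (-x)) / 2)
          + (f y + f (-y)) / 2 * ((g x - g (-x)) / 2)
          + (h y + h (-y)) / 2 * ((h x - h (-x)) / 2))
          - ((g y + g (-y)) / 2) • (fun x : G => (f x - f (-x)) / 2) := by
      funext x
      simp only [Pi.sub_apply, Pi.smul_apply, smul_eq_mul]
      ring
    rw [e]; exact V.sub_mem (hA y) (V.smul_mem _ hfo)
  -- there is a point where the even part of f does not vanish
  have hey : ∃ y₀ : G, (f y₀ + f (-y₀)) / 2 ≠ 0 := by
    by_contra hall
    push_neg at hall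
    apply hfV
    have e : f = (fun x : G => (f x - f (-x)) / 2) := by
      funext x
      linear_combination (hall x)
    rw [e]; exact hfo
  obtain ⟨y₀, hy₀⟩ := hey
  obtain ⟨γ, hγ⟩ : ∃ γ : ℂ, γ * ((f y₀ + f (-y₀)) / 2) = (h y₀ + h (-y₀)) / 2 :=
    ⟨((h y₀ + h (-y₀)) / 2) / ((f y₀ + f (-y₀)) / 2), div_mul_cancel₀ _ hy₀⟩
  -- claim 1 : even part of h equals γ times even part of f, pointwise
  have claim1 : ∀ y : G, (h y + h (-y)) / 2 = γ * ((f y + f (-y)) / 2) := by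
    intro y
    by_contra hc
    apply hho
    set c : ℂ := ((f y₀ + f (-y₀)) / 2) * ((h y + h (-y)) / 2 - γ * ((f y + f (-y)) / 2))
      with hcdef
    have hcne : c ≠ 0 := mul_ne_zero hy₀ (sub_ne_zero.mpr hc)
    have hm : (fun x => c * ((h x - h (-x)) / 2)) ∈ V := by
      have e : (fun x => c * ((h x - h (-x)) / 2))
          = ((f y₀ + f (-y₀)) / 2) • (fun x => (f y + f (-y)) / 2 * ((g x - g (-x)) / 2)
              + (h y + h (-y)) / 2 * ((h x - h (-x)) / 2))
            - ((f y + f (-y)) / 2) • (fun x => (f y₀ + f (-y₀)) / 2 * ((g x - g (-x)) / 2)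
              + (h y₀ + h (-y₀)) / 2 * ((h x - h (-x)) / 2)) := by
        funext x
        simp only [Pi.sub_apply, Pi.smul_apply, smul_eq_mul, hcdef]
        linear_combination (-(((f y + f (-y)) / 2) * ((h x - h (-x)) / 2))) * hγ
      rw [e]; exact V.sub_mem (V.smul_mem _ (hA' y)) (V.smul_mem _ (hA' y₀))
    have e2 : (fun x : G => (h x - h (-x)) / 2)
        = c⁻¹ • (fun x => c * ((h x - h (-x)) / 2)) := by
      funext x
      simp only [Pi.smul_apply, smul_eq_mul]
      rw [← mul_assoc, inv_mul_cancel₀ hcne, one_mul]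
    rw [e2]; exact V.smul_mem _ hm
  -- k := odd part of g + γ * odd part of h is in V
  have hk : (fun x : G => (g x - g (-x)) / 2 + γ * ((h x - h (-x)) / 2)) ∈ V := by
    have e : (fun x : G => (g x - g (-x)) / 2 + γ * ((h x - h (-x)) / 2))
        = ((f y₀ + f (-y₀)) / 2)⁻¹ • (fun x => (f y₀ + f (-y₀)) / 2 * ((g x - g (-x)) / 2)
            + (h y₀ + h (-y₀)) / 2 * ((h x - h (-x)) / 2)) := by
      funext x
      simp only [Pi.smul_apply, smul_eq_mul]
      rw [show (f y₀ + f (-y₀)) / 2 * ((g x - g (-x)) / 2)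
          + (h y₀ + h (-y₀)) / 2 * ((h x - h (-x)) / 2)
          = (f y₀ + f (-y₀)) / 2 * ((g x - g (-x)) / 2 + γ * ((h x - h (-x)) / 2)) from by
        linear_combination (-((h x - h (-x)) / 2)) * hγ]
      rw [inv_mul_cancel_left₀ hy₀]
    rw [e]; exact V.smul_mem _ (hA' y₀)
  -- family (C)
  have hC : ∀ y : G, (fun x => ((g y - g (-y)) / 2 + γ * ((h y - h (-y)) / 2))
      * ((f x + f (-x)) / 2) + (f y - f (-y)) / 2 * ((g x + g (-x)) / 2)) ∈ V := by
    intro y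
    have e : (fun x => ((g y - g (-y)) / 2 + γ * ((h y - h (-y)) / 2))
        * ((f x + f (-x)) / 2) + (f y - f (-y)) / 2 * ((g x + g (-x)) / 2))
        = (fun x => (g y - g (-y)) / 2 * ((f x + f (-x)) / 2)
          + (f y - f (-y)) / 2 * ((g x + g (-x)) / 2)
          + (h y - h (-y)) / 2 * ((h x + h (-x)) / 2)) := by
      funext x
      linear_combination (-((h y - h (-y)) / 2)) * claim1 x
    rw [e]; exact hB y
  -- claim 2 : cross relation
  have claim2 : ∀ y z : G, ((g y - g (-y)) / 2 + γ * ((h y - h (-y)) / 2)) * ((f z - f (-z)) / 2)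
      = ((g z - g (-z)) / 2 + γ * ((h z - h (-z)) / 2)) * ((f y - f (-y)) / 2) := by
    intro y z
    by_contra hc
    apply hfeV
    set c : ℂ := ((g y - g (-y)) / 2 + γ * ((h y - h (-y)) / 2)) * ((f z - f (-z)) / 2)
      - ((g z - g (-z)) / 2 + γ * ((h z - h (-z)) / 2)) * ((f y - f (-y)) / 2) with hcdef
    have hcne : c ≠ 0 := sub_ne_zero.mpr hc
    have hm : (fun x => c * ((f x + f (-x)) / 2)) ∈ V := by
      have e : (fun x => c * ((f x + f (-x)) / 2))
          = ((f z - f (-z)) / 2) • (fun x => ((g y - g (-y)) / 2 + γ * ((h y - h (-y)) / 2))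
              * ((f x + f (-x)) / 2) + (f y - f (-y)) / 2 * ((g x + g (-x)) / 2))
            - ((f y - f (-y)) / 2) • (fun x => ((g z - g (-z)) / 2 + γ * ((h z - h (-z)) / 2))
              * ((f x + f (-x)) / 2) + (f z - f (-z)) / 2 * ((g x + g (-x)) / 2)) := by
        funext x
        simp only [Pi.sub_apply, Pi.smul_apply, smul_eq_mul, hcdef]
        ring
      rw [e]; exact V.sub_mem (V.smul_mem _ (hC y)) (V.smul_mem _ (hC z))
    have e2 : (fun x : G => (f x + f (-x)) / 2)
        = c⁻¹ • (fun x => c * ((f x + f (-x)) / 2)) := by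
      funext x
      simp only [Pi.smul_apply, smul_eq_mul]
      rw [← mul_assoc, inv_mul_cancel₀ hcne, one_mul]
    rw [e2]; exact V.smul_mem _ hm
  -- find η
  have hfin : ∃ η : ℂ, ∀ y : G,
      (g y - g (-y)) / 2 + γ * ((h y - h (-y)) / 2) = -η * ((f y - f (-y)) / 2) := by
    by_cases hall : ∀ z : G, (f z - f (-z)) / 2 = 0
    · refine ⟨0, ?_⟩
      intro y
      rw [hall y]
      -- show k y = 0
      by_contra hky
      have hkne : (g y - g (-y)) / 2 + γ * ((h y - h (-y)) / 2) ≠ 0 := by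
        intro h0; apply hky; rw [h0]; ring
      apply hfeV
      set c : ℂ := (g y - g (-y)) / 2 + γ * ((h y - h (-y)) / 2) with hcdef
      have hm : (fun x => c * ((f x + f (-x)) / 2)) ∈ V := by
        have e : (fun x => c * ((f x + f (-x)) / 2))
            = (fun x => ((g y - g (-y)) / 2 + γ * ((h y - h (-y)) / 2))
              * ((f x + f (-x)) / 2) + (f y - f (-y)) / 2 * ((g x + g (-x)) / 2)) := by
          funext x
          rw [hall y]
          ring
        rw [e]; exact hC y
      have e2 : (fun x : G => (f x + f (-x)) / 2)
          = c⁻¹ • (fun x => c * ((f x + f (-x)) / 2)) := by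
        funext x
        simp only [Pi.smul_apply, smul_eq_mul]
        rw [← mul_assoc, inv_mul_cancel₀ hkne, one_mul]
      rw [e2]; exact V.smul_mem _ hm
    · push_neg at hall
      obtain ⟨z, hz⟩ := hall
      refine ⟨-(((g z - g (-z)) / 2 + γ * ((h z - h (-z)) / 2)) / ((f z - f (-z)) / 2)), ?_⟩
      intro y
      have h2' := claim2 y z
      rw [neg_neg, div_mul_eq_mul_div, eq_div_iff hz]
      exact h2'
  obtain ⟨η, hη⟩ := hfin
  refine ⟨γ, η, claim1, ?_⟩
  intro x
  linear_combination hη x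
end

section
/- Let G be an abelian group and let V be a two-sided invariant and (-I)-invariant linear space of complex-valued functions on G. Let f, g, h : G → ℂ be functions such that f and h are linearly independent modulo V, the odd part h^o of h does not belong to V, and the odd part f^o of f is not identically zero. Suppose that for every y ∈ G the functions x ↦ f(x−y) − f(x)g(y) − g(x)f(y) − h(x)h(y) and x ↦ f(x−y) − f(y−x) belong to V. Then there exist a constant η ∈ ℂ and a function φ ∈ V with φ(−x) = φ(x) for all x ∈ G such that g^e = η·f^e + φ. -/
private lemma aux_field (Fa Fb Ga Gb Ha Hb Fx Gx Hx : ℂ)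
    (hD : Fa * Hb - Fb * Ha ≠ 0) :
    Gx / 2 - -(Ga * Hb - Gb * Ha) / (Fa * Hb - Fb * Ha) * (Fx / 2)
      = (1 / (2 * (Fa * Hb - Fb * Ha)))
        * (Hb * (Ga * Fx + Fa * Gx + Ha * Hx) - Ha * (Gb * Fx + Fb * Gx + Hb * Hx)) := by
  rw [div_mul_eq_mul_div, one_div_mul_eq_div, div_sub_div _ _ two_ne_zero hD, div_eq_div_iff (mul_ne_zero two_ne_zero hD) (mul_ne_zero two_ne_zero hD)]
  ring

theorem stmt_5 {G : Type*} [AddCommGroup G]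
    (V : Submodule ℂ (G → ℂ))
    (hVtrans : ∀ f : G → ℂ, f ∈ V → ∀ y : G, (fun x => f (x + y)) ∈ V)
    (hVneg : ∀ f : G → ℂ, f ∈ V → (fun x => f (-x)) ∈ V)
    (f g h : G → ℂ)
    (hindep : ∀ c d : ℂ, (fun x => c * f x + d * h x) ∈ V → c = 0 ∧ d = 0)
    (hho : (fun x => (h x - h (-x)) / 2) ∉ V)
    (hfo : (fun x : G => (f x - f (-x)) / 2) ≠ 0)
    (h1 : ∀ y : G, (fun x => f (x - y) - f x * g y - g x * f y - h x * h y) ∈ V)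
    (h2 : ∀ y : G, (fun x => f (x - y) - f (y - x)) ∈ V) :
    ∃ (η : ℂ) (φ : G → ℂ), φ ∈ V ∧ (∀ x : G, φ (-x) = φ x) ∧
      (∀ x : G, (g x + g (-x)) / 2 = η * ((f x + f (-x)) / 2) + φ x) := by
  -- the odd part of f is in V
  have hfoV : (fun x : G => f x - f (-x)) ∈ V := by
    have := h2 0
    simpa using this
  -- key family of members of V
  have hW : ∀ b : G, (fun x => -(f x * g (-b)) - g x * f (-b) - h x * h (-b)
      + f (-x) * g b + g (-x) * f b + h (-x) * h b) ∈ V := by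
    intro b
    have hA := h1 (-b)
    have hB := hVneg _ (h1 b)
    have hC := h2 (-b)
    have hmem := V.sub_mem (V.sub_mem hA hB) hC
    have heq : (fun x => -(f x * g (-b)) - g x * f (-b) - h x * h (-b)
          + f (-x) * g b + g (-x) * f b + h (-x) * h b)
        = ((fun x => f (x - -b) - f x * g (-b) - g x * f (-b) - h x * h (-b))
          - (fun x => f (-x - b) - f (-x) * g b - g (-x) * f b - h (-x) * h b))
          - (fun x => f (x - -b) - f (-b - x)) := by
      funext x
      simp only [Pi.sub_apply]
      have e1 : (-b - x : G) = -x - b := by abel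
      rw [e1]
      ring
    rw [heq]
    exact hmem
  have hR : ∀ a : G, (fun x => (g a - g (-a)) * (f x + f (-x))
      + (f a - f (-a)) * (g x + g (-x)) + (h a - h (-a)) * (h x + h (-x))) ∈ V := by
    intro a
    have hmem := V.sub_mem (hW a) (hW (-a))
    have heq : (fun x => (g a - g (-a)) * (f x + f (-x))
          + (f a - f (-a)) * (g x + g (-x)) + (h a - h (-a)) * (h x + h (-x)))
        = ((fun x => -(f x * g (-a)) - g x * f (-a) - h x * h (-a)
            + f (-x) * g a + g (-x) * f a + h (-x) * h a)
          - (fun x => -(f x * g (- -a)) - g x * f (- -a) - h x * h (- -a)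
            + f (-x) * g (-a) + g (-x) * f (-a) + h (-x) * h (-a))) := by
      funext x
      simp only [Pi.sub_apply, neg_neg]
      ring
    rw [heq]
    exact hmem
  -- choose a with odd part of f nonzero at a
  obtain ⟨a, ha⟩ : ∃ a : G, f a - f (-a) ≠ 0 := by
    by_contra hcon
    push_neg at hcon
    apply hfo
    funext x
    simp [hcon x]
  -- choose b making the determinant nonzero
  obtain ⟨b, hb⟩ : ∃ b : G,
      (f a - f (-a)) * (h b - h (-b)) - (f b - f (-b)) * (h a - h (-a)) ≠ 0 := by
    by_contra hcon
    push_neg at hcon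
    apply hho
    have heq : (fun x : G => (h x - h (-x)) / 2)
        = ((h a - h (-a)) / (f a - f (-a)) / 2) • (fun x : G => f x - f (-x)) := by
      funext x
      simp only [Pi.smul_apply, smul_eq_mul]
      have h2' : (h x - h (-x)) = (h a - h (-a)) / (f a - f (-a)) * (f x - f (-x)) := by
        rw [div_mul_eq_mul_div, eq_div_iff ha]
        linear_combination hcon x
      rw [h2']
      ring
    rw [heq]
    exact V.smul_mem _ hfoV
  -- build the answer
  refine ⟨-((g a - g (-a)) * (h b - h (-b)) - (g b - g (-b)) * (h a - h (-a))) /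
      ((f a - f (-a)) * (h b - h (-b)) - (f b - f (-b)) * (h a - h (-a))),
    fun x => (g x + g (-x)) / 2
      - -((g a - g (-a)) * (h b - h (-b)) - (g b - g (-b)) * (h a - h (-a))) /
        ((f a - f (-a)) * (h b - h (-b)) - (f b - f (-b)) * (h a - h (-a)))
        * ((f x + f (-x)) / 2), ?_, ?_, ?_⟩
  · have hcomb := V.sub_mem (V.smul_mem (h b - h (-b)) (hR a))
      (V.smul_mem (h a - h (-a)) (hR b))
    have hmem := V.smul_mem
      (1 / (2 * ((f a - f (-a)) * (h b - h (-b)) - (f b - f (-b)) * (h a - h (-a)))))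
      hcomb
    have heq : (fun x => (g x + g (-x)) / 2
          - -((g a - g (-a)) * (h b - h (-b)) - (g b - g (-b)) * (h a - h (-a))) /
            ((f a - f (-a)) * (h b - h (-b)) - (f b - f (-b)) * (h a - h (-a)))
            * ((f x + f (-x)) / 2))
        = (1 / (2 * ((f a - f (-a)) * (h b - h (-b)) - (f b - f (-b)) * (h a - h (-a)))))
          • ((h b - h (-b)) • (fun x => (g a - g (-a)) * (f x + f (-x))
              + (f a - f (-a)) * (g x + g (-x)) + (h a - h (-a)) * (h x + h (-x)))
            - (h a - h (-a)) • (fun x => (g b - g (-b)) * (f x + f (-x))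
              + (f b - f (-b)) * (g x + g (-x)) + (h b - h (-b)) * (h x + h (-x)))) := by
      funext x
      simp only [Pi.smul_apply, Pi.sub_apply, smul_eq_mul]
      exact aux_field _ _ _ _ _ _ _ _ _ hb
    rw [heq]
    exact hmem
  · intro x
    simp only [neg_neg]
    ring
  · intro x
    ring
end

section
/- Let G be an abelian group and let m : G → ℂ be a nonzero multiplicative function such that m(−x) = m(x) for all x ∈ G. Let f, h : G → ℂ be functions with f(−x) = f(x) and h(−x) = −h(x) for all x ∈ G and with h not identically zero. Then f and h satisfy f(x+y) = f(x)m(y) + m(x)f(y) + h(x)h(y) for all x, y ∈ G if and only if there exists a nonzero additive function a : G → ℂ such that f = (1/2)a²·m and h = a·m. -/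
theorem stmt_6 {G : Type*} [AddCommGroup G]
    (m : G → ℂ)
    (hm : ∀ x y : G, m (x + y) = m x * m y)
    (hm0 : m ≠ 0)
    (hmeven : ∀ x : G, m (-x) = m x)
    (f h : G → ℂ)
    (hfeven : ∀ x : G, f (-x) = f x)
    (hhodd : ∀ x : G, h (-x) = -h x)
    (hh0 : h ≠ 0) :
    (∀ x y : G, f (x + y) = f x * m y + m x * f y + h x * h y) ↔
      ∃ a : G → ℂ, (∀ x y : G, a (x + y) = a x + a y) ∧ a ≠ 0 ∧
        (∀ x : G, f x = (1 / 2) * (a x) ^ 2 * m x) ∧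
        (∀ x : G, h x = a x * m x) := by
  constructor
  · intro heq
    have hm0' : m 0 ≠ 0 := by
      intro h0
      apply hm0
      funext x
      have e := hm x 0
      rw [add_zero, h0, mul_zero] at e
      simpa using e
    have hm1 : m 0 = 1 := by
      have h00 := hm 0 0
      rw [add_zero] at h00
      have := mul_left_cancel₀ hm0' (show m 0 * m 0 = m 0 * 1 by rw [← h00, mul_one])
      exact this
    have hmne : ∀ x : G, m x ≠ 0 := by
      intro x
      have e : m x * m (-x) = 1 := by rw [← hm, add_neg_cancel, hm1]
      exact left_ne_zero_of_mul_eq_one e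
    have h0 : h 0 = 0 := by
      have e : h 0 = -h 0 := by rw [← hhodd 0, neg_zero]
      linear_combination e / 2
    have f0 : f 0 = 0 := by
      have e := heq 0 0
      rw [add_zero, hm1, h0] at e
      linear_combination -e
    set a : G → ℂ := fun x => h x / m x with ha_def
    have ham : ∀ x : G, h x = a x * m x := by
      intro x
      rw [ha_def]
      exact (div_mul_cancel₀ (h x) (hmne x)).symm
    have hfa : ∀ x : G, f x = 1 / 2 * a x ^ 2 * m x := by
      intro x
      have e := heq x (-x)
      rw [hmeven, hfeven, hhodd, add_neg_cancel, f0, ham x] at e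
      have e2 : f x * (2 * m x) = 1 / 2 * a x ^ 2 * m x * (2 * m x) := by
        linear_combination -e
      exact mul_right_cancel₀ (mul_ne_zero two_ne_zero (hmne x)) e2
    have sq : ∀ x y : G, a (x + y) ^ 2 = (a x + a y) ^ 2 := by
      intro x y
      have e := heq x y
      rw [hfa (x + y), hfa x, hfa y, ham x, ham y, hm x y] at e
      apply mul_right_cancel₀ (mul_ne_zero (hmne x) (hmne y))
      linear_combination 2 * e
    have star : ∀ x y z : G,
        h x * h y * m z + h (x + y) * h z = m x * (h y * h z) + h x * h (y + z) := by
      intro x y z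
      have e1 := heq (x + y) z
      have e2 := heq x (y + z)
      have e3 := heq x y
      have e4 := heq y z
      have key : f (x + y) * m z + m (x + y) * f z + h (x + y) * h z =
          f x * m (y + z) + m x * f (y + z) + h x * h (y + z) := by
        rw [← e1, ← e2, add_assoc]
      rw [e3, e4, hm x y, hm y z] at key
      linear_combination key
    have astar : ∀ x y z : G,
        a x * a y + a (x + y) * a z = a y * a z + a x * a (y + z) := by
      intro x y z
      have e := star x y z
      rw [ham x, ham y, ham z, ham (x + y), ham (y + z), hm x y, hm y z] at e
      apply mul_right_cancel₀ (mul_ne_zero (mul_ne_zero (hmne x) (hmne y)) (hmne z))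
      linear_combination e
    obtain ⟨z₀, hz₀⟩ : ∃ z₀, h z₀ ≠ 0 := Function.ne_iff.mp hh0
    have hc : a z₀ ≠ 0 := by
      intro hzero
      apply hz₀
      rw [ham z₀, hzero, zero_mul]
    set K : ℂ := (a (z₀ + z₀) - 2 * a z₀) / (a z₀ * a z₀) with hKdef
    have hKc : K * (a z₀ * a z₀) = a (z₀ + z₀) - 2 * a z₀ :=
      div_mul_cancel₀ _ (mul_ne_zero hc hc)
    have shift : ∀ y : G, a (y + z₀) * a z₀ =
        a z₀ * a z₀ + a y * a (z₀ + z₀) - a y * a z₀ := by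
      intro y
      linear_combination astar y z₀ z₀
    have addK : ∀ x y : G, a (x + y) = a x + a y + K * (a x * a y) := by
      intro x y
      have e1 := astar x y z₀
      have e2 := shift y
      have goal' : a (x + y) * (a z₀ * a z₀) =
          (a x + a y + K * (a x * a y)) * (a z₀ * a z₀) := by
        linear_combination a z₀ * e1 + a x * e2 - (a x * a y) * hKc
      exact mul_right_cancel₀ (mul_ne_zero hc hc) goal'
    have sqK : ∀ x y : G,
        K * (a x * a y) * (2 * (a x + a y) + K * (a x * a y)) = 0 := by
      intro x y
      linear_combination sq x y - (a (x + y) + a x + a y + K * (a x * a y)) * addK x y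
    have hK0 : K = 0 := by
      have c1 := sqK z₀ z₀
      rcases mul_eq_zero.mp c1 with hca | hcb
      · rcases mul_eq_zero.mp hca with hk | hcc
        · exact hk
        · exact absurd hcc (mul_ne_zero hc hc)
      · exfalso
        have hK : K * (a z₀ * a z₀) = -(4 * a z₀) := by linear_combination hcb
        have hd' : a (z₀ + z₀) = -2 * a z₀ := by linear_combination addK z₀ z₀ + hK
        have c2 := sqK z₀ (z₀ + z₀)
        rw [hd'] at c2
        have h48 : (48 : ℂ) * (a z₀ * a z₀) = 0 := by
          linear_combination c2 - (4 * (K * (a z₀ * a z₀)) - 12 * a z₀) * hK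
        have : a z₀ = 0 := by
          have := mul_eq_zero.mp h48
          rcases this with h' | h'
          · norm_num at h'
          · rcases mul_eq_zero.mp h' with h'' | h'' <;> exact h''
        exact hc this
    have hadd : ∀ x y : G, a (x + y) = a x + a y := by
      intro x y
      have e := addK x y
      rw [hK0, zero_mul, add_zero] at e
      exact e
    refine ⟨a, hadd, ?_, hfa, ham⟩
    intro hA
    apply hc
    rw [hA]
    rfl
  · rintro ⟨a, hadd, _, hfa, hha⟩ x y
    rw [hfa (x + y), hfa x, hfa y, hha x, hha y, hm x y, hadd x y]
    ring
end

section
/- Let G be an abelian group, let m : G → ℂ be a multiplicative function such that either m(−x) = m(x) for all x ∈ G or m is bounded, let b, φ : G → ℂ be bounded functions, and let α ∈ ℂ∖{0}, λ ∈ ℂ be constants. Define f = αm − αb, g = ((1−αλ²)/2)m + ((1+αλ²)/2)b − λφ, and h = αλm − αλb + φ. Then the function (x,y) ↦ f(x−y) − f(x)g(y) − g(x)f(y) − h(x)h(y) is bounded on G×G. -/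
/-- A complex-valued function on `G` is bounded. -/
def Bdd {G : Type*} (F : G → ℂ) : Prop := ∃ C : ℝ, ∀ x : G, ‖F x‖ ≤ C

theorem Bdd.congr' {X : Type*} {F1 F2 : X → ℂ} (h : ∀ x, F1 x = F2 x) (h2 : Bdd F2) :
    Bdd F1 := by
  obtain ⟨C, hC⟩ := h2
  exact ⟨C, fun x => by rw [h]; exact hC x⟩

theorem Bdd.comp' {X Y : Type*} {F : X → ℂ} (h : Bdd F) (k : Y → X) :
    Bdd (fun y => F (k y)) := by
  obtain ⟨C, hC⟩ := h
  exact ⟨C, fun y => hC (k y)⟩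

theorem Bdd.addf {X : Type*} {F1 F2 : X → ℂ} (h1 : Bdd F1) (h2 : Bdd F2) :
    Bdd (fun x => F1 x + F2 x) := by
  obtain ⟨C1, hC1⟩ := h1
  obtain ⟨C2, hC2⟩ := h2
  exact ⟨C1 + C2, fun x =>
    le_trans (norm_add_le _ _) (add_le_add (hC1 x) (hC2 x))⟩

theorem Bdd.negf {X : Type*} {F : X → ℂ} (h : Bdd F) : Bdd (fun x => -F x) := by
  obtain ⟨C, hC⟩ := h
  exact ⟨C, fun x => by simpa using hC x⟩

theorem Bdd.subf {X : Type*} {F1 F2 : X → ℂ} (h1 : Bdd F1) (h2 : Bdd F2) :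
    Bdd (fun x => F1 x - F2 x) := by
  have := h1.addf h2.negf
  exact this.congr' (fun x => by ring) |>.congr' (fun x => (sub_eq_add_neg _ _))

theorem Bdd.mulf {X : Type*} {F1 F2 : X → ℂ} (h1 : Bdd F1) (h2 : Bdd F2) :
    Bdd (fun x => F1 x * F2 x) := by
  obtain ⟨C1, hC1⟩ := h1
  obtain ⟨C2, hC2⟩ := h2
  refine ⟨|C1| * |C2|, fun x => ?_⟩
  rw [norm_mul]
  exact mul_le_mul (le_trans (hC1 x) (le_abs_self _))
    (le_trans (hC2 x) (le_abs_self _)) (norm_nonneg _) (abs_nonneg _)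

theorem Bdd.cmul {X : Type*} (c : ℂ) {F : X → ℂ} (h : Bdd F) :
    Bdd (fun x => c * F x) := by
  obtain ⟨C, hC⟩ := h
  refine ⟨‖c‖ * |C|, fun x => ?_⟩
  rw [norm_mul]
  exact mul_le_mul_of_nonneg_left (le_trans (hC x) (le_abs_self _)) (norm_nonneg _)

set_option maxHeartbeats 800000 in
theorem stmt_9 {G : Type*} [AddCommGroup G]
    (m b φ : G → ℂ) (α lam : ℂ)
    (hm : ∀ x y : G, m (x + y) = m x * m y)
    (hmsym : (∀ x : G, m (-x) = m x) ∨ Bdd m)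
    (hb : Bdd b) (hφ : Bdd φ) (hα : α ≠ 0)
    (f g h : G → ℂ)
    (hf : ∀ x : G, f x = α * m x - α * b x)
    (hg : ∀ x : G, g x = (1 - α * lam ^ 2) / 2 * m x + (1 + α * lam ^ 2) / 2 * b x - lam * φ x)
    (hh : ∀ x : G, h x = α * lam * m x - α * lam * b x + φ x) :
    ∃ C : ℝ, ∀ x y : G,
      ‖f (x - y) - f x * g y - g x * f y - h x * h y‖ ≤ C := by
  suffices hs : Bdd (fun p : G × G =>
      f (p.1 - p.2) - f p.1 * g p.2 - g p.1 * f p.2 - h p.1 * h p.2) by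
    obtain ⟨C, hC⟩ := hs
    exact ⟨C, fun x y => hC (x, y)⟩
  rcases hmsym with hsym | hmb
  · -- the expression equals -(α * b (x-y)) + α * (b x * b y) - φ x * φ y
    have key : ∀ p : G × G,
        f (p.1 - p.2) - f p.1 * g p.2 - g p.1 * f p.2 - h p.1 * h p.2
          = -(α * b (p.1 - p.2)) + α * (b p.1 * b p.2) - φ p.1 * φ p.2 := by
      rintro ⟨x, y⟩
      have hxy : m (x - y) = m x * m y := by
        rw [sub_eq_add_neg, hm, hsym]
      simp only [hf, hg, hh, hxy]
      ring
    refine Bdd.congr' key ?_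
    exact (((Bdd.cmul α (hb.comp' (fun p : G × G => p.1 - p.2))).negf).addf
      (Bdd.cmul α ((hb.comp' (fun p : G × G => p.1)).mulf
        (hb.comp' (fun p : G × G => p.2))))).subf
      ((hφ.comp' (fun p : G × G => p.1)).mulf (hφ.comp' (fun p : G × G => p.2)))
  · -- m bounded: f, g, h are all bounded
    have hbf : Bdd f :=
      Bdd.congr' hf ((Bdd.cmul α hmb).subf (Bdd.cmul α hb))
    have hbg : Bdd g :=
      Bdd.congr' hg (((Bdd.cmul _ hmb).addf (Bdd.cmul _ hb)).subf (Bdd.cmul lam hφ))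
    have hbh : Bdd h :=
      Bdd.congr' hh (((Bdd.cmul _ hmb).subf (Bdd.cmul _ hb)).addf hφ)
    exact (((hbf.comp' (fun p : G × G => p.1 - p.2)).subf
      ((hbf.comp' (fun p : G × G => p.1)).mulf (hbg.comp' (fun p : G × G => p.2)))).subf
      ((hbg.comp' (fun p : G × G => p.1)).mulf (hbf.comp' (fun p : G × G => p.2)))).subf
      ((hbh.comp' (fun p : G × G => p.1)).mulf (hbh.comp' (fun p : G × G => p.2)))
end

section
/- Let G be an abelian group, let b : G → ℂ be a bounded function, let ρ ∈ ℂ, λ ∈ ℂ∖{0} be constants, and let f₀, g₀ : G → ℂ satisfy f₀(x+y) = f₀(x)f₀(y) − g₀(x)g₀(y) for all x, y ∈ G, with f₀(−x) = f₀(x) and g₀(−x) = g₀(x) for all x ∈ G. Define f = −λ²f₀ + λ²b, g = ((1+ρ²)/2)f₀ + ρg₀ + ((1−ρ²)/2)b, and h = λρf₀ + λg₀ − λρb. Then the function (x,y) ↦ f(x−y) − f(x)g(y) − g(x)f(y) − h(x)h(y) is bounded on G×G. -/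
theorem stmt_11 {G : Type*} [AddCommGroup G]
    (b f₀ g₀ : G → ℂ) (ρ lam : ℂ)
    (hb : Bdd b) (hlam : lam ≠ 0)
    (h₀ : ∀ x y : G, f₀ (x + y) = f₀ x * f₀ y - g₀ x * g₀ y)
    (hf₀ : ∀ x : G, f₀ (-x) = f₀ x) (hg₀ : ∀ x : G, g₀ (-x) = g₀ x)
    (f g h : G → ℂ)
    (hf : ∀ x : G, f x = -lam ^ 2 * f₀ x + lam ^ 2 * b x)
    (hg : ∀ x : G, g x = (1 + ρ ^ 2) / 2 * f₀ x + ρ * g₀ x + (1 - ρ ^ 2) / 2 * b x)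
    (hh : ∀ x : G, h x = lam * ρ * f₀ x + lam * g₀ x - lam * ρ * b x) :
    ∃ C : ℝ, ∀ x y : G,
      ‖f (x - y) - f x * g y - g x * f y - h x * h y‖ ≤ C := by
  obtain ⟨C, hC⟩ := hb
  refine ⟨‖lam ^ 2‖ * (C + C * C), fun x y => ?_⟩
  have key : f (x - y) - f x * g y - g x * f y - h x * h y
      = lam ^ 2 * (b (x - y) - b x * b y) := by
    have hxy : f₀ (x - y) = f₀ x * f₀ y - g₀ x * g₀ y := by
      rw [sub_eq_add_neg, h₀, hf₀, hg₀]
    simp only [hf, hg, hh, hxy]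
    ring
  rw [key, norm_mul]
  have h0 : (0:ℝ) ≤ C := le_trans (norm_nonneg _) (hC x)
  have hsub : ‖b (x - y) - b x * b y‖
      ≤ ‖b (x - y)‖ + ‖b x * b y‖ := by
    rw [sub_eq_add_neg]
    exact (norm_add_le _ _).trans (by rw [norm_neg])
  have : ‖b (x - y)‖ + ‖b x * b y‖ ≤ C + C * C := by
    refine add_le_add (hC _) ?_
    rw [norm_mul]
    exact mul_le_mul (hC x) (hC y) (norm_nonneg _) h0
  exact mul_le_mul_of_nonneg_left (hsub.trans this) (norm_nonneg _)
end

section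
/- Let G be an abelian group, let b : G → ℂ be a bounded function, let λ ∈ ℂ∖{0} be a constant, and let f₀, g₀ : G → ℂ satisfy f₀(x+y) = f₀(x)f₀(y) − g₀(x)g₀(y) for all x, y ∈ G, with f₀(−x) = f₀(x) and g₀(−x) = −g₀(x) for all x ∈ G. Define f = λ²f₀ − λ²b, g = (1/2)f₀ + (1/2)b, and h = λg₀. Then the function (x,y) ↦ f(x−y) − f(x)g(y) − g(x)f(y) − h(x)h(y) is bounded on G×G. -/
theorem stmt_12 {G : Type*} [AddCommGroup G]
    (b f₀ g₀ : G → ℂ) (lam : ℂ)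
    (hb : Bdd b) (hlam : lam ≠ 0)
    (h₀ : ∀ x y : G, f₀ (x + y) = f₀ x * f₀ y - g₀ x * g₀ y)
    (hf₀ : ∀ x : G, f₀ (-x) = f₀ x) (hg₀ : ∀ x : G, g₀ (-x) = -g₀ x)
    (f g h : G → ℂ)
    (hf : ∀ x : G, f x = lam ^ 2 * f₀ x - lam ^ 2 * b x)
    (hg : ∀ x : G, g x = (1 / 2) * f₀ x + (1 / 2) * b x)
    (hh : ∀ x : G, h x = lam * g₀ x) :
    ∃ C : ℝ, ∀ x y : G,
      ‖f (x - y) - f x * g y - g x * f y - h x * h y‖ ≤ C := by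
  obtain ⟨C, hC⟩ := hb
  set D : ℝ := max C 0 with hD
  have hC' : ∀ x, ‖b x‖ ≤ D := fun x => (hC x).trans (le_max_left _ _)
  refine ⟨‖lam ^ 2‖ * (D * D + D), fun x y => ?_⟩
  have key : f (x - y) - f x * g y - g x * f y - h x * h y
      = lam ^ 2 * (b x * b y - b (x - y)) := by
    have h1 : f₀ (x - y) = f₀ x * f₀ y + g₀ x * g₀ y := by
      rw [sub_eq_add_neg, h₀, hf₀, hg₀]; ring
    rw [hf, hf, hf, hg, hg, hh, hh, h1]; ring
  rw [key, norm_mul]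
  have h2 : ‖b x * b y - b (x - y)‖ ≤ D * D + D := by
    refine (norm_sub_le _ _).trans ?_
    gcongr
    · rw [norm_mul]
      have := hC' x
      have := hC' y
      have h0 : (0:ℝ) ≤ D := le_max_right _ _
      exact mul_le_mul (hC' x) (hC' y) (norm_nonneg _) h0
    · exact hC' _
  exact mul_le_mul_of_nonneg_left h2 (norm_nonneg _)
end

section
/- Let G be an abelian group, let m : G → ℂ be a nonzero bounded multiplicative function with m(−x) = m(x) for all x ∈ G, let a : G → ℂ be a nonzero additive function, and let b : G → ℂ be a bounded function with b(−x) = −b(x) for all x ∈ G. Define f = (1/2)a²·m + b, g = m, and h = −i·a·m. Then the function (x,y) ↦ f(x−y) − f(x)g(y) − g(x)f(y) − h(x)h(y) is bounded on G×G. -/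
theorem stmt_13 {G : Type*} [AddCommGroup G]
    (m a b : G → ℂ)
    (hm : ∀ x y : G, m (x + y) = m x * m y) (hm0 : m ≠ 0) (hmb : Bdd m)
    (hmsym : ∀ x : G, m (-x) = m x)
    (ha : ∀ x y : G, a (x + y) = a x + a y) (ha0 : a ≠ 0)
    (hb : Bdd b) (hbodd : ∀ x : G, b (-x) = -b x)
    (f g h : G → ℂ)
    (hf : ∀ x : G, f x = (1 / 2) * (a x) ^ 2 * m x + b x)
    (hg : ∀ x : G, g x = m x)
    (hh : ∀ x : G, h x = -Complex.I * a x * m x) :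
    ∃ C : ℝ, ∀ x y : G,
      ‖f (x - y) - f x * g y - g x * f y - h x * h y‖ ≤ C := by
  obtain ⟨x0, hx0⟩ : ∃ x0, m x0 ≠ 0 := by
    by_contra hc
    push_neg at hc
    exact hm0 (funext hc)
  have hm1 : m 0 = 1 := by
    have h1 : m x0 * m 0 = m x0 * 1 := by rw [mul_one, ← hm, add_zero]
    exact mul_left_cancel₀ hx0 h1
  have hmsq : ∀ x, m x * m x = 1 := by
    intro x
    have := hm x (-x)
    rw [add_neg_cancel, hm1, hmsym] at this
    exact this.symm
  have hmsub : ∀ x y, m (x - y) = m x * m y := by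
    intro x y
    have h1 : m (x - y) * (m y * m y) = m x * m y := by
      rw [← mul_assoc, ← hm, sub_add_cancel]
    rw [hmsq, mul_one] at h1
    exact h1
  have ha0' : a 0 = 0 := by
    have := ha 0 0
    rw [add_zero] at this
    linear_combination -this
  have hasub : ∀ x y, a (x - y) = a x - a y := by
    intro x y
    have := ha (x - y) y
    rw [sub_add_cancel] at this
    linear_combination -this
  have key : ∀ x y, f (x - y) - f x * g y - g x * f y - h x * h y
      = b (x - y) - b x * m y - m x * b y := by
    intro x y
    rw [hf, hf, hf, hg, hg, hh, hh, hmsub, hasub]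
    linear_combination (-(a x * a y * m x * m y)) * Complex.I_sq
  obtain ⟨Cm, hCm⟩ := hmb
  obtain ⟨Cb, hCb⟩ := hb
  have hCb0 : 0 ≤ Cb := le_trans (norm_nonneg _) (hCb 0)
  have hCm0 : 0 ≤ Cm := le_trans (norm_nonneg _) (hCm 0)
  refine ⟨Cb + Cb * Cm + Cm * Cb, fun x y => ?_⟩
  rw [key]
  have h1 : ‖b x * m y‖ ≤ Cb * Cm := by
    rw [norm_mul]; exact mul_le_mul (hCb x) (hCm y) (norm_nonneg _) hCb0
  have h2 : ‖m x * b y‖ ≤ Cm * Cb := by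
    rw [norm_mul]; exact mul_le_mul (hCm x) (hCb y) (norm_nonneg _) hCm0
  have h3 := norm_sub_le (b (x - y) - b x * m y) (m x * b y)
  have h4 := norm_sub_le (b (x - y)) (b x * m y)
  have h5 := hCb (x - y)
  linarith
end

section
/- Let G be an abelian group and let f, g, h : G → ℂ be functions such that the function (x,y) ↦ f(x−y) − f(x)g(y) − g(x)f(y) − h(x)h(y) is bounded on G×G. Suppose h is unbounded and there exist constants (λ, μ) ∈ ℂ² with (λ, μ) ≠ (0,0) such that λf + μh is bounded (i.e., f and h are linearly dependent modulo B(G)). Then f is unbounded. -/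
set_option maxHeartbeats 1000000 in
theorem stmt_14 {G : Type*} [AddCommGroup G]
    (f g h : G → ℂ)
    (hbound : ∃ C : ℝ, ∀ x y : G,
      ‖f (x - y) - f x * g y - g x * f y - h x * h y‖ ≤ C)
    (hh : ¬ Bdd h)
    (hdep : ∃ l μ : ℂ, (l, μ) ≠ (0, 0) ∧ Bdd (fun x => l * f x + μ * h x)) :
    ¬ Bdd f := by
  rintro ⟨M, hM⟩
  obtain ⟨C, hC⟩ := hbound
  apply hh
  by_cases hcase : ∀ y1 y2 : G, f y1 * h y2 = f y2 * h y1
  · by_cases hz : ∀ x : G, h x = 0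
    · exact ⟨0, fun x => by simp [hz x]⟩
    push_neg at hz
    obtain ⟨y0, hy0⟩ := hz
    by_cases hf0 : f y0 = 0
    · have hfz : ∀ x : G, f x = 0 := by
        intro x
        have := hcase x y0
        rw [hf0, zero_mul] at this
        exact (mul_eq_zero.mp this).resolve_right hy0
      refine ⟨Real.sqrt C, fun x => ?_⟩
      have h1 := hC x x
      simp only [hfz, mul_zero, zero_mul, zero_sub, sub_zero, zero_mul, norm_neg] at h1
      rw [norm_mul] at h1
      have h2 : ‖h x‖ ^ 2 ≤ C := by nlinarith [norm_nonneg (h x)]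
      have := Real.sqrt_le_sqrt h2
      rwa [Real.sqrt_sq (norm_nonneg _)] at this
    · refine ⟨‖h y0 / f y0‖ * M, fun x => ?_⟩
      have hx : h x = (h y0 / f y0) * f x := by
        field_simp
        have := hcase y0 x
        linear_combination this
      rw [hx, norm_mul]
      have hMnn : 0 ≤ ‖h y0 / f y0‖ := norm_nonneg _
      exact mul_le_mul_of_nonneg_left (hM x) hMnn
  · push_neg at hcase
    obtain ⟨y1, y2, hne⟩ := hcase
    set c : ℂ := f y1 * h y2 - f y2 * h y1 with hc
    have hc0 : c ≠ 0 := sub_ne_zero.mpr hne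
    set D : ℝ := ‖f y2‖ * C + ‖f y1‖ * C
      + ‖f y2‖ * M + ‖f y1‖ * M
      + ‖f y2 * g y1 - f y1 * g y2‖ * M with hD
    refine ⟨D / ‖c‖, fun x => ?_⟩
    have key : c * h x =
        f y2 * (f (x - y1) - f x * g y1 - g x * f y1 - h x * h y1)
        - f y1 * (f (x - y2) - f x * g y2 - g x * f y2 - h x * h y2)
        - f y2 * f (x - y1) + f y1 * f (x - y2)
        + (f y2 * g y1 - f y1 * g y2) * f x := by
      ring
    have hb : ‖c * h x‖ ≤ D := by
      rw [key]
      calc ‖f y2 * (f (x - y1) - f x * g y1 - g x * f y1 - h x * h y1)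
            - f y1 * (f (x - y2) - f x * g y2 - g x * f y2 - h x * h y2)
            - f y2 * f (x - y1) + f y1 * f (x - y2)
            + (f y2 * g y1 - f y1 * g y2) * f x‖
          ≤ ‖f y2 * (f (x - y1) - f x * g y1 - g x * f y1 - h x * h y1)‖
            + ‖f y1 * (f (x - y2) - f x * g y2 - g x * f y2 - h x * h y2)‖
            + ‖f y2 * f (x - y1)‖ + ‖f y1 * f (x - y2)‖
            + ‖(f y2 * g y1 - f y1 * g y2) * f x‖ := by
            set A := f y2 * (f (x - y1) - f x * g y1 - g x * f y1 - h x * h y1)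
            set B := f y1 * (f (x - y2) - f x * g y2 - g x * f y2 - h x * h y2)
            set C' := f y2 * f (x - y1)
            set D' := f y1 * f (x - y2)
            set E' := (f y2 * g y1 - f y1 * g y2) * f x
            calc ‖A - B - C' + D' + E'‖
                ≤ ‖A - B - C' + D'‖ + ‖E'‖ := norm_add_le _ _
              _ ≤ ‖A - B - C'‖ + ‖D'‖ + ‖E'‖ := by
                  gcongr; exact norm_add_le _ _
              _ ≤ ‖A - B‖ + ‖C'‖ + ‖D'‖ + ‖E'‖ := by
                  gcongr; exact norm_sub_le _ _
              _ ≤ ‖A‖ + ‖B‖ + ‖C'‖ + ‖D'‖ + ‖E'‖ := by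
                  gcongr; exact norm_sub_le _ _
        _ ≤ D := by
            rw [hD]
            simp only [norm_mul]
            have n1 := norm_nonneg (f y1)
            have n2 := norm_nonneg (f y2)
            have n3 := norm_nonneg (f y2 * g y1 - f y1 * g y2)
            have e1 := mul_le_mul_of_nonneg_left (hC x y1) n2
            have e2 := mul_le_mul_of_nonneg_left (hC x y2) n1
            have e3 := mul_le_mul_of_nonneg_left (hM (x - y1)) n2
            have e4 := mul_le_mul_of_nonneg_left (hM (x - y2)) n1
            have e5 := mul_le_mul_of_nonneg_left (hM x) n3
            exact add_le_add (add_le_add (add_le_add (add_le_add e1 e2) e3) e4) e5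
    rw [norm_mul] at hb
    rw [le_div_iff₀ (norm_pos_iff.mpr hc0)]
    linarith [hb]
end

section
/- Let G be an abelian group and let f, g, h : G → ℂ be functions such that the function (x,y) ↦ f(x−y) − f(x)g(y) − g(x)f(y) − h(x)h(y) is bounded on G×G, and such that the odd parts f^o, g^o, and h^o are bounded functions on G. Then the function (x,y) ↦ f^e(x+y) − f^e(x)g^e(y) − g^e(x)f^e(y) − h^e(x)h^e(y) is bounded on G×G. -/
theorem stmt_15 {G : Type*} [AddCommGroup G]
    (f g h : G → ℂ)
    (hbound : ∃ C : ℝ, ∀ x y : G,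
      ‖f (x - y) - f x * g y - g x * f y - h x * h y‖ ≤ C)
    (hfo : Bdd (fun x : G => (f x - f (-x)) / 2))
    (hgo : Bdd (fun x : G => (g x - g (-x)) / 2))
    (hho : Bdd (fun x : G => (h x - h (-x)) / 2)) :
    ∃ C : ℝ, ∀ x y : G,
      ‖(f (x + y) + f (-(x + y))) / 2
        - (f x + f (-x)) / 2 * ((g y + g (-y)) / 2)
        - (g x + g (-x)) / 2 * ((f y + f (-y)) / 2)
        - (h x + h (-x)) / 2 * ((h y + h (-y)) / 2)‖ ≤ C := by
  obtain ⟨C, hC⟩ := hbound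
  obtain ⟨Cf, hCf⟩ := hfo
  obtain ⟨Cg, hCg⟩ := hgo
  obtain ⟨Ch, hCh⟩ := hho
  have hCf0 : 0 ≤ Cf := le_trans (norm_nonneg _) (hCf 0)
  have hCg0 : 0 ≤ Cg := le_trans (norm_nonneg _) (hCg 0)
  have hCh0 : 0 ≤ Ch := le_trans (norm_nonneg _) (hCh 0)
  refine ⟨C + Cf * Cg + Cg * Cf + Ch * Ch, fun x y => ?_⟩
  have key : (f (x + y) + f (-(x + y))) / 2
        - (f x + f (-x)) / 2 * ((g y + g (-y)) / 2)
        - (g x + g (-x)) / 2 * ((f y + f (-y)) / 2)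
        - (h x + h (-x)) / 2 * ((h y + h (-y)) / 2)
      = ((f (x - -y) - f x * g (-y) - g x * f (-y) - h x * h (-y))
        + (f (-x - y) - f (-x) * g y - g (-x) * f y - h (-x) * h y)) / 2
        - ((f x - f (-x)) / 2) * ((g y - g (-y)) / 2)
        - ((g x - g (-x)) / 2) * ((f y - f (-y)) / 2)
        - ((h x - h (-x)) / 2) * ((h y - h (-y)) / 2) := by
    have h1 : x - -y = x + y := by abel
    have h2 : -x - y = -(x + y) := by abel
    rw [h1, h2]; ring
  rw [key]
  have tri : ∀ a b c d : ℂ, ‖a - b - c - d‖ ≤ ‖a‖ + ‖b‖ + ‖c‖ + ‖d‖ := by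
    intro a b c d
    calc ‖a - b - c - d‖ ≤ ‖a - b - c‖ + ‖d‖ := norm_sub_le _ _
      _ ≤ (‖a - b‖ + ‖c‖) + ‖d‖ := by gcongr; exact norm_sub_le _ _
      _ ≤ ((‖a‖ + ‖b‖) + ‖c‖) + ‖d‖ := by gcongr; exact norm_sub_le _ _
  refine le_trans (tri _ _ _ _) ?_
  gcongr ?_ + ?_ + ?_ + ?_
  · calc ‖(_ + _) / (2:ℂ)‖ = (‖(f (x - -y) - f x * g (-y) - g x * f (-y) - h x * h (-y))
        + (f (-x - y) - f (-x) * g y - g (-x) * f y - h (-x) * h y)‖) / 2 := by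
          rw [norm_div]; norm_num
      _ ≤ (C + C) / 2 := by
          gcongr
          exact le_trans (norm_add_le _ _) (by gcongr <;> [exact hC x (-y); exact hC (-x) y])
      _ = C := by ring
  · rw [norm_mul]; exact mul_le_mul (hCf x) (hCg y) (norm_nonneg _) hCf0
  · rw [norm_mul]; exact mul_le_mul (hCg x) (hCf y) (norm_nonneg _) hCg0
  · rw [norm_mul]; exact mul_le_mul (hCh x) (hCh y) (norm_nonneg _) hCh0
end
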